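/- Let f : [n] → [m] be an injective monotone (hence strictly increasing) map. Then for every monotone map g : [p] → [m], the pullback of the Whitney elementary form ω_f along g satisfies g*ω_f = Σ_h ω_h in Ω_p, where the sum runs over all monotone maps h : [n] → [p] with g ∘ h = f. -/

import Mathlib

noncomputable section

/-- The DG-algebra of polynomial differential forms on the standard
`m`-simplex, modelled as the exterior algebra over
`R = MvPolynomial (Fin m) K` of the free module `R^m`. -/
abbrev Omega (K : Type) [Field K] (m : ℕ) :=
  ExteriorAlgebra (MvPolynomial (Fin m) K) (Fin m → MvPolynomial (Fin m) K)

/-- The coordinates `x₀, x₁, …, x_m`, where `x₁, …, x_m` are the polynomial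
variables and `x₀ := 1 - (x₁ + ⋯ + x_m)`. -/
def xC (K : Type) [Field K] (m : ℕ) : Fin (m + 1) → MvPolynomial (Fin m) K :=
  Fin.cases (1 - ∑ i : Fin m, MvPolynomial.X i) (fun i => MvPolynomial.X i)

/-- The vectors of `R^m` representing `dx₀, dx₁, …, dx_m`: the standard basis
vectors for `dx₁, …, dx_m`, and `-(dx₁ + ⋯ + dx_m)` for `dx₀`. -/
def vDX (K : Type) [Field K] (m : ℕ) :
    Fin (m + 1) → (Fin m → MvPolynomial (Fin m) K) :=
  Fin.cases (-∑ i : Fin m, Pi.single i 1) (fun i => Pi.single i 1)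

/-- The one-forms `dx₀, dx₁, …, dx_m` in `Ω_m` (degree `1` elements of the
exterior algebra). -/
def dX (K : Type) [Field K] (m : ℕ) (j : Fin (m + 1)) : Omega K m :=
  ExteriorAlgebra.ι (MvPolynomial (Fin m) K) (vDX K m j)

/-- The Whitney elementary form
`ω_f = n! Σᵢ (-1)ⁱ x_{f i} dx_{f 0} ∧ ⋯ ∧ (omit dx_{f i}) ∧ ⋯ ∧ dx_{f n}`
associated to a map `f : [n] → [m]`. -/
def omegaF (K : Type) [Field K] {n m : ℕ} (f : Fin (n + 1) → Fin (m + 1)) :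
    Omega K m :=
  (n.factorial : MvPolynomial (Fin m) K) •
    ∑ i : Fin (n + 1),
      (-1 : MvPolynomial (Fin m) K) ^ (i : ℕ) •
        (algebraMap (MvPolynomial (Fin m) K) (Omega K m) (xC K m (f i)) *
          ((List.ofFn fun j : Fin (n + 1) => dX K m (f j)).eraseIdx (i : ℕ)).prod)

/-- On polynomials, the pullback along `g : [n] → [m]` substitutes
`x_j ↦ Σ_{i ∈ [n], g i = j} x_i`. -/
def pullbackPoly (K : Type) [Field K] {n m : ℕ}
    (g : Fin (n + 1) → Fin (m + 1)) :
    MvPolynomial (Fin m) K →ₐ[K] MvPolynomial (Fin n) K :=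
  MvPolynomial.aeval fun i : Fin m =>
    ∑ j ∈ Finset.univ.filter (fun j : Fin (n + 1) => g j = i.succ), xC K n j

/-- On one-forms, the pullback along `g : [n] → [m]` sends
`dx_j ↦ Σ_{i ∈ [n], g i = j} dx_i`; this is the corresponding vector. -/
def pullbackVec (K : Type) [Field K] {n m : ℕ}
    (g : Fin (n + 1) → Fin (m + 1)) (i : Fin m) :
    Fin n → MvPolynomial (Fin n) K :=
  ∑ j ∈ Finset.univ.filter (fun j : Fin (n + 1) => g j = i.succ), vDX K n j

/-- The pullback `g* : Ω_m → Ω_n` along a map `g : [n] → [m]`: the (unique)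
`K`-algebra homomorphism determined by `x_j ↦ Σ_{i ∈ [n], g i = j} x_i` and
`dx_j ↦ Σ_{i ∈ [n], g i = j} dx_i` for every `j ∈ [m]`. -/
def pullback (K : Type) [Field K] {n m : ℕ}
    (g : Fin (n + 1) → Fin (m + 1)) : Omega K m → Omega K n :=
  letI φ : MvPolynomial (Fin m) K →+* Omega K n :=
    (algebraMap (MvPolynomial (Fin n) K) (Omega K n)).comp
      (pullbackPoly K g).toRingHom
  letI hcomm : ∀ (c : MvPolynomial (Fin m) K) (x : Omega K n),
      φ c * x = x * φ c := fun c x => Algebra.commutes (pullbackPoly K g c) x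
  letI : Algebra (MvPolynomial (Fin m) K) (Omega K n) := φ.toAlgebra' hcomm
  letI L : (Fin m → MvPolynomial (Fin m) K) →ₗ[MvPolynomial (Fin m) K]
      Omega K n :=
    { toFun := fun v =>
        ExteriorAlgebra.ι (MvPolynomial (Fin n) K)
          (∑ i : Fin m, pullbackPoly K g (v i) • pullbackVec K g i)
      map_add' := by
        intro u v
        show ExteriorAlgebra.ι (MvPolynomial (Fin n) K)
            (∑ i : Fin m, pullbackPoly K g ((u + v) i) • pullbackVec K g i) =
          ExteriorAlgebra.ι (MvPolynomial (Fin n) K)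
              (∑ i : Fin m, pullbackPoly K g (u i) • pullbackVec K g i) +
            ExteriorAlgebra.ι (MvPolynomial (Fin n) K)
              (∑ i : Fin m, pullbackPoly K g (v i) • pullbackVec K g i)
        rw [← map_add, ← Finset.sum_add_distrib]
        exact congrArg _ (Finset.sum_congr rfl fun i _ => by
          simp [Pi.add_apply, map_add, add_smul])
      map_smul' := by
        intro c v
        show ExteriorAlgebra.ι (MvPolynomial (Fin n) K)
            (∑ i : Fin m, pullbackPoly K g ((c • v) i) • pullbackVec K g i) =
          algebraMap (MvPolynomial (Fin n) K) (Omega K n)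
              (pullbackPoly K g c) *
            ExteriorAlgebra.ι (MvPolynomial (Fin n) K)
              (∑ i : Fin m, pullbackPoly K g (v i) • pullbackVec K g i)
        rw [← Algebra.smul_def, ← map_smul, Finset.smul_sum]
        exact congrArg _ (Finset.sum_congr rfl fun i _ => by
          simp [Pi.smul_apply, smul_eq_mul, map_mul, smul_smul]) }
  (ExteriorAlgebra.lift (MvPolynomial (Fin m) K)
    ⟨L, fun v => ExteriorAlgebra.ι_sq_zero _⟩ :
      Omega K m →ₐ[MvPolynomial (Fin m) K] Omega K n)


set_option synthInstance.maxHeartbeats 1000000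
set_option maxHeartbeats 1000000

section AuxLemmas

variable (K : Type) [Field K]

lemma sum_xC (p : ℕ) : ∑ a : Fin (p + 1), xC K p a = 1 := by
  rw [Fin.sum_univ_succ]
  simp [xC]

lemma sum_vDX (p : ℕ) : ∑ a : Fin (p + 1), vDX K p a = 0 := by
  rw [Fin.sum_univ_succ]
  simp [vDX]

lemma pullbackPoly_xC {n m : ℕ} (g : Fin (n + 1) → Fin (m + 1)) (j : Fin (m + 1)) :
    pullbackPoly K g (xC K m j) =
      ∑ a ∈ Finset.univ.filter (fun a => g a = j), xC K n a := by
  induction j using Fin.cases with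
  | zero =>
    have key : ∑ a ∈ Finset.univ.filter (fun a => g a = (0 : Fin (m + 1))), xC K n a
        + ∑ i : Fin m, ∑ a ∈ Finset.univ.filter (fun a => g a = Fin.succ i), xC K n a = 1 := by
      rw [← Fin.sum_univ_succ
        (fun j' => ∑ a ∈ Finset.univ.filter (fun a => g a = j'), xC K n a)]
      rw [Finset.sum_fiberwise Finset.univ g (xC K n)]
      exact sum_xC K n
    have hx : pullbackPoly K g (xC K m 0)
        = 1 - ∑ i : Fin m, ∑ a ∈ Finset.univ.filter (fun a => g a = Fin.succ i), xC K n a := by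
      simp [xC, pullbackPoly, map_sub, map_one, map_sum, MvPolynomial.aeval_X]
    rw [hx]
    linear_combination -key
  | succ i =>
    simp [xC, pullbackPoly, MvPolynomial.aeval_X]

lemma pullback_vec_sum {n m : ℕ} (g : Fin (n + 1) → Fin (m + 1)) (j : Fin (m + 1)) :
    ∑ i : Fin m, pullbackPoly K g ((vDX K m j) i) • pullbackVec K g i
      = ∑ a ∈ Finset.univ.filter (fun a => g a = j), vDX K n a := by
  induction j using Fin.cases with
  | zero =>
    have key : ∑ a ∈ Finset.univ.filter (fun a => g a = (0 : Fin (m + 1))), vDX K n a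
        + ∑ i : Fin m, ∑ a ∈ Finset.univ.filter (fun a => g a = Fin.succ i), vDX K n a = 0 := by
      rw [← Fin.sum_univ_succ
        (fun j' => ∑ a ∈ Finset.univ.filter (fun a => g a = j'), vDX K n a)]
      rw [Finset.sum_fiberwise Finset.univ g (vDX K n)]
      exact sum_vDX K n
    have hx : ∀ i : Fin m, pullbackPoly K g ((vDX K m 0) i) = -1 := by
      intro i
      simp [vDX, Pi.single_apply]
    have hvec : ∀ i : Fin m, pullbackVec K g i
        = ∑ a ∈ Finset.univ.filter (fun a => g a = Fin.succ i), vDX K n a := fun i => rfl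
    simp only [hx, hvec, neg_one_smul]
    rw [Finset.sum_neg_distrib]
    exact neg_eq_of_add_eq_zero_left key
  | succ k =>
    have hx : ∀ i : Fin m, pullbackPoly K g ((vDX K m (Fin.succ k)) i)
        = if i = k then 1 else 0 := by
      intro i
      simp [vDX, Pi.single_apply]
    simp only [hx, ite_smul, one_smul, zero_smul, Finset.sum_ite_eq', Finset.mem_univ, if_true]
    rfl

lemma pullback_dX {n m : ℕ} (g : Fin (n + 1) → Fin (m + 1)) (j : Fin (m + 1)) :
    pullback K g (dX K m j) = ∑ a ∈ Finset.univ.filter (fun a => g a = j), dX K n a := by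
  unfold pullback dX
  rw [ExteriorAlgebra.lift_ι_apply]
  show ExteriorAlgebra.ι (MvPolynomial (Fin n) K)
      (∑ i : Fin m, pullbackPoly K g ((vDX K m j) i) • pullbackVec K g i) = _
  rw [pullback_vec_sum, map_sum]

lemma pullback_algebraMap {n m : ℕ} (g : Fin (n + 1) → Fin (m + 1))
    (c : MvPolynomial (Fin m) K) :
    pullback K g (algebraMap (MvPolynomial (Fin m) K) (Omega K m) c)
      = algebraMap (MvPolynomial (Fin n) K) (Omega K n) (pullbackPoly K g c) := by
  letI φ : MvPolynomial (Fin m) K →+* Omega K n :=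
    (algebraMap (MvPolynomial (Fin n) K) (Omega K n)).comp
      (pullbackPoly K g).toRingHom
  letI hcomm : ∀ (c : MvPolynomial (Fin m) K) (x : Omega K n),
      φ c * x = x * φ c := fun c x => Algebra.commutes (pullbackPoly K g c) x
  letI : Algebra (MvPolynomial (Fin m) K) (Omega K n) := φ.toAlgebra' hcomm
  unfold pullback
  exact AlgHom.commutes _ c

lemma pullback_mul {n m : ℕ} (g : Fin (n + 1) → Fin (m + 1)) (x y : Omega K m) :
    pullback K g (x * y) = pullback K g x * pullback K g y := by
  unfold pullback
  exact map_mul _ x y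

lemma pullback_natCast {n m : ℕ} (g : Fin (n + 1) → Fin (m + 1)) (k : ℕ) :
    pullback K g (k : Omega K m) = (k : Omega K n) := by
  unfold pullback
  exact map_natCast _ k

lemma pullback_neg_one_pow {n m : ℕ} (g : Fin (n + 1) → Fin (m + 1)) (k : ℕ) :
    pullback K g ((-1 : Omega K m) ^ k) = (-1 : Omega K n) ^ k := by
  unfold pullback
  rw [map_pow, map_neg, map_one]

lemma pullback_sum {n m : ℕ} (g : Fin (n + 1) → Fin (m + 1))
    {ι : Type*} (s : Finset ι) (v : ι → Omega K m) :
    pullback K g (∑ i ∈ s, v i) = ∑ i ∈ s, pullback K g (v i) := by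
  unfold pullback
  exact map_sum _ v s

lemma pullback_list_prod {n m : ℕ} (g : Fin (n + 1) → Fin (m + 1))
    (l : List (Omega K m)) :
    pullback K g l.prod = (l.map (pullback K g)).prod := by
  unfold pullback
  exact map_list_prod _ l

lemma eraseIdx_ofFn {α : Type*} {n : ℕ} (u : Fin (n + 1) → α) (i : Fin (n + 1)) :
    (List.ofFn u).eraseIdx (i : ℕ) = List.ofFn (fun j : Fin n => u (i.succAbove j)) := by
  apply List.ext_getElem
  · simp [List.length_eraseIdx, i.isLt]
  · intro k h1 h2
    simp only [List.getElem_eraseIdx, List.getElem_ofFn]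
    have hk2 : k < n := by
      simpa [List.length_eraseIdx, i.isLt] using h1
    split_ifs with hk hlen
    · have hsa : i.succAbove ⟨k, hk2⟩ = ⟨k, by omega⟩ := by
        rw [Fin.succAbove_of_castSucc_lt _ _
          (by simp only [Fin.lt_def, Fin.coe_castSucc]; exact hk)]
        rfl
      rw [hsa]
    · have hsa : i.succAbove ⟨k, hk2⟩ = ⟨k + 1, by omega⟩ := by
        rw [Fin.succAbove_of_le_castSucc _ _
          (by simp only [Fin.le_def, Fin.coe_castSucc]; omega)]
        rfl
      rw [hsa]

lemma comp_mono {n m p : ℕ} {f : Fin (n + 1) → Fin (m + 1)}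
    {g : Fin (p + 1) → Fin (m + 1)} (hf : Monotone f) (hfinj : Function.Injective f)
    (hg : Monotone g) (h : Fin (n + 1) → Fin (p + 1))
    (hc : ∀ j, g (h j) = f j) : Monotone h := by
  have hsf := hf.strictMono_of_injective hfinj
  intro j j' hle
  rcases eq_or_lt_of_le hle with rfl | hlt
  · exact le_rfl
  by_contra hgt
  push_neg at hgt
  have hmono := hg hgt.le
  rw [hc, hc] at hmono
  exact absurd hmono (not_le.mpr (hsf hlt))

lemma sum_piFinset_split {β M : Type*} [DecidableEq β] [Fintype β] [AddCommMonoid M]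
    {n : ℕ} (S : Fin (n + 1) → Finset β) (i : Fin (n + 1))
    (F : (Fin (n + 1) → β) → M) :
    ∑ h ∈ Fintype.piFinset S, F h
      = ∑ a ∈ S i, ∑ r ∈ Fintype.piFinset (fun j : Fin n => S (i.succAbove j)),
          F (i.insertNth a r) := by
  rw [← Finset.sum_product']
  refine Finset.sum_nbij' (fun h => (h i, fun j => h (i.succAbove j)))
    (fun x => i.insertNth x.1 x.2) ?_ ?_ ?_ ?_ ?_
  · intro h hh
    rw [Fintype.mem_piFinset] at hh
    exact Finset.mem_product.mpr ⟨hh i, Fintype.mem_piFinset.mpr fun j => hh _⟩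
  · intro x hx
    rw [Finset.mem_product] at hx
    rw [Fintype.mem_piFinset]
    intro j
    by_cases hj : j = i
    · subst hj
      simpa only [Fin.insertNth_apply_same] using hx.1
    · obtain ⟨k, rfl⟩ := Fin.exists_succAbove_eq hj
      simpa only [Fin.insertNth_apply_succAbove] using Fintype.mem_piFinset.mp hx.2 k
  · intro h _
    exact Fin.insertNth_self_removeNth i h
  · intro x _
    have h1 := Fin.insertNth_apply_same (α := fun _ : Fin (n + 1) => β) i x.1 x.2
    have h2 := fun j =>
      Fin.insertNth_apply_succAbove (α := fun _ : Fin (n + 1) => β) i x.1 x.2 j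
    exact Prod.ext h1 (funext h2)
  · intro h _
    exact congrArg F (Fin.insertNth_self_removeNth i h).symm

lemma omegaF_eq {n m : ℕ} (f : Fin (n + 1) → Fin (m + 1)) :
    omegaF K f = (n.factorial : Omega K m) *
      ∑ i : Fin (n + 1), (-1 : Omega K m) ^ (i : ℕ) *
        (algebraMap (MvPolynomial (Fin m) K) (Omega K m) (xC K m (f i)) *
          (List.ofFn fun j : Fin n => dX K m (f (i.succAbove j))).prod) := by
  unfold omegaF
  simp only [Algebra.smul_def, map_pow, map_neg, map_one, map_natCast, eraseIdx_ofFn]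

end AuxLemmas
set_option synthInstance.maxHeartbeats 1000000 in
open scoped Classical in
/-- Let `f : [n] → [m]` be an injective monotone (hence strictly increasing)
map. Then for every monotone map `g : [p] → [m]`, the pullback of the Whitney
elementary form `ω_f` along `g` is `g*ω_f = Σ_h ω_h` in `Ω_p`, the sum running
over all monotone maps `h : [n] → [p]` with `g ∘ h = f`. -/
theorem stmt10 (K : Type) [Field K] [CharZero K] (n m p : ℕ)
    (f : Fin (n + 1) → Fin (m + 1)) (hf : Monotone f)
    (hfinj : Function.Injective f)
    (g : Fin (p + 1) → Fin (m + 1)) (hg : Monotone g) :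
    pullback K g (omegaF K f) =
      ∑ h ∈ Finset.univ.filter
          (fun h : Fin (n + 1) → Fin (p + 1) => Monotone h ∧ g ∘ h = f),
        omegaF K h := by
  set S : Fin (n + 1) → Finset (Fin (p + 1)) :=
    fun j => Finset.univ.filter (fun a => g a = f j) with hS
  have hset : (Finset.univ.filter
        (fun h : Fin (n + 1) → Fin (p + 1) => Monotone h ∧ g ∘ h = f))
      = Fintype.piFinset S := by
    ext h
    simp only [Finset.mem_filter, Finset.mem_univ, true_and,
      Fintype.mem_piFinset, hS]
    constructor
    · rintro ⟨-, hc⟩ j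
      exact congrFun hc j
    · intro hj
      exact ⟨comp_mono hf hfinj hg h hj, funext hj⟩
  have hterm : ∀ i : Fin (n + 1),
      pullback K g
        (algebraMap (MvPolynomial (Fin m) K) (Omega K m) (xC K m (f i)) *
          (List.ofFn fun j : Fin n => dX K m (f (i.succAbove j))).prod)
      = ∑ h ∈ Fintype.piFinset S,
          algebraMap (MvPolynomial (Fin p) K) (Omega K p) (xC K p (h i)) *
            (List.ofFn fun j : Fin n => dX K p (h (i.succAbove j))).prod := by
    intro i
    rw [pullback_mul, pullback_algebraMap, pullbackPoly_xC,
      pullback_list_prod, List.map_ofFn]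
    have hdx : (pullback K g ∘ fun j : Fin n => dX K m (f (i.succAbove j)))
        = fun j : Fin n => ∑ a ∈ S (i.succAbove j), dX K p a := by
      funext j
      exact pullback_dX K g (f (i.succAbove j))
    rw [hdx]
    rw [show (List.ofFn fun j : Fin n => ∑ a ∈ S (i.succAbove j), dX K p a).prod
        = MultilinearMap.mkPiAlgebraFin (MvPolynomial (Fin p) K) n (Omega K p)
            (fun j : Fin n => ∑ a ∈ S (i.succAbove j), dX K p a) from
      (MultilinearMap.mkPiAlgebraFin_apply _).symm]
    rw [MultilinearMap.map_sum_finset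
      (MultilinearMap.mkPiAlgebraFin (MvPolynomial (Fin p) K) n (Omega K p))
      (fun (_ : Fin n) (a : Fin (p + 1)) => dX K p a)
      (fun j => S (i.succAbove j))]
    rw [map_sum, Finset.sum_mul]
    rw [sum_piFinset_split S i
      (fun h => algebraMap (MvPolynomial (Fin p) K) (Omega K p) (xC K p (h i)) *
        (List.ofFn fun j : Fin n => dX K p (h (i.succAbove j))).prod)]
    simp only [Finset.mul_sum]
    refine Finset.sum_congr rfl fun a _ => Finset.sum_congr rfl fun r _ => ?_
    rw [Fin.insertNth_apply_same, MultilinearMap.mkPiAlgebraFin_apply]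
    congr 1
    simp only [Fin.insertNth_apply_succAbove]
  have hL : pullback K g (omegaF K f) = (n.factorial : Omega K p) *
      ∑ i : Fin (n + 1), (-1 : Omega K p) ^ (i : ℕ) *
        ∑ h ∈ Fintype.piFinset S,
          algebraMap (MvPolynomial (Fin p) K) (Omega K p) (xC K p (h i)) *
            (List.ofFn fun j : Fin n => dX K p (h (i.succAbove j))).prod := by
    rw [omegaF_eq, pullback_mul, pullback_natCast, pullback_sum]
    congr 1
    refine Finset.sum_congr rfl fun i _ => ?_
    rw [pullback_mul, pullback_neg_one_pow, hterm i]
  rw [hset, hL]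
  simp only [omegaF_eq, Finset.mul_sum]
  rw [Finset.sum_comm]

end
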